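/- For every positive integer $i$, $\sum_{k=1}^{\infty} \frac{h_k}{k(i+k)} = \frac{2\ln 2 \, h_i}{i} + \frac{H_i h_i}{i} - \frac{1}{i}\sum_{k=1}^{i} \frac{h_k}{k}$. -/

import Mathlib

open Real

noncomputable def H (n k : ℕ) : ℝ := ∑ i ∈ Finset.Icc 1 k, 1 / (i : ℝ) ^ n

noncomputable def h (n k : ℕ) : ℝ := ∑ i ∈ Finset.Icc 1 k, 1 / (2 * (i : ℝ) - 1) ^ n

noncomputable def zeta (s : ℕ) : ℝ := ∑' n : ℕ, 1 / ((n : ℝ) + 1) ^ s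

open Filter Finset Topology

lemma H_zero' : H 1 0 = 0 := by simp [H]
lemma h_zero' : h 1 0 = 0 := by simp [h]

lemma H_succ' (n : ℕ) : H 1 (n + 1) = H 1 n + 1 / ((n : ℝ) + 1) := by
  rw [H, H, Finset.sum_Icc_succ_top (by omega)]
  push_cast
  ring

lemma h_succ' (n : ℕ) : h 1 (n + 1) = h 1 n + 1 / (2 * (n : ℝ) + 1) := by
  rw [h, h, Finset.sum_Icc_succ_top (by omega)]
  push_cast
  ring

lemma H_range (n : ℕ) : H 1 n = ∑ k ∈ Finset.range n, 1 / ((k : ℝ) + 1) := by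
  induction n with
  | zero => simp [H_zero']
  | succ m ih => rw [H_succ', Finset.sum_range_succ, ih]

lemma h_range (n : ℕ) : h 1 n = ∑ k ∈ Finset.range n, 1 / (2 * (k : ℝ) + 1) := by
  induction n with
  | zero => simp [h_zero']
  | succ m ih => rw [h_succ', Finset.sum_range_succ, ih]

lemma h_nonneg' (n : ℕ) : 0 ≤ h 1 n := by
  refine Finset.sum_nonneg fun j hj => ?_
  simp only [Finset.mem_Icc] at hj
  have h1 : (1 : ℝ) ≤ (j : ℝ) := by exact_mod_cast hj.1
  have h2 : (0 : ℝ) < 2 * (j : ℝ) - 1 := by linarith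
  positivity

lemma H_nonneg' (n : ℕ) : 0 ≤ H 1 n := by
  refine Finset.sum_nonneg fun j hj => ?_
  positivity

lemma h_le_H (n : ℕ) : h 1 n ≤ H 1 n := by
  refine Finset.sum_le_sum fun j hj => ?_
  simp only [Finset.mem_Icc] at hj
  have h1 : (1 : ℝ) ≤ (j : ℝ) := by exact_mod_cast hj.1
  rw [pow_one, pow_one]
  exact one_div_le_one_div_of_le (by linarith) (by linarith)

lemma H_two_mul (N : ℕ) : H 1 (2 * N) = h 1 N + H 1 N / 2 := by
  induction N with
  | zero => simp [H_zero', h_zero']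
  | succ n ih =>
    have e : 2 * (n + 1) = (2 * n + 1) + 1 := by ring
    rw [e, H_succ', H_succ', ih, h_succ', H_succ']
    have hn : ((n : ℝ) + 1) ≠ 0 := by positivity
    push_cast
    field_simp
    ring

lemma H_eq_harmonic (n : ℕ) : H 1 n = (harmonic n : ℝ) := by
  rw [harmonic_eq_sum_Icc]
  push_cast
  simp [H, one_div]

/-- `H N / N → 0` -/
lemma tendsto_H_div : Tendsto (fun N : ℕ => H 1 N / N) atTop (𝓝 0) := by
  have := tendsto_one_div_add_atTop_nhds_zero_nat.cesaro
  refine this.congr fun n => ?_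
  rw [← H_range, inv_mul_eq_div]

/-- `2 h N - H N → 2 log 2` -/
lemma tendsto_two_h_sub_H :
    Tendsto (fun N : ℕ => 2 * h 1 N - H 1 N) atTop (𝓝 (2 * Real.log 2)) := by
  have h2N : Tendsto (fun N : ℕ => 2 * N) atTop atTop :=
    Filter.tendsto_atTop_atTop.mpr fun b => ⟨b, fun a ha => by omega⟩
  have t1 : Tendsto (fun N : ℕ => ((harmonic (2 * N) : ℝ) - Real.log ((2 * N : ℕ) : ℝ))) atTop
      (𝓝 Real.eulerMascheroniConstant) := Real.tendsto_harmonic_sub_log.comp h2N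
  have t2 : Tendsto (fun N : ℕ => ((harmonic N : ℝ) - Real.log N)) atTop
      (𝓝 Real.eulerMascheroniConstant) := Real.tendsto_harmonic_sub_log
  have t3 : Tendsto (fun N : ℕ =>
      2 * (((harmonic (2 * N) : ℝ) - Real.log ((2 * N : ℕ) : ℝ)) - ((harmonic N : ℝ) - Real.log N))
      + 2 * Real.log 2) atTop (𝓝 (2 * Real.log 2)) := by
    have := ((t1.sub t2).const_mul 2).add_const (2 * Real.log 2)
    simpa using this
  refine t3.congr' ?_
  filter_upwards [eventually_ge_atTop 1] with N hN
  have hN0 : (N : ℝ) ≠ 0 := by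
    have : (1 : ℝ) ≤ (N : ℝ) := by exact_mod_cast hN
    linarith
  have hlog : Real.log ((2 * N : ℕ) : ℝ) = Real.log 2 + Real.log N := by
    push_cast
    rw [← Real.log_mul two_ne_zero hN0]
  rw [hlog, ← H_eq_harmonic, ← H_eq_harmonic, H_two_mul]
  ring

lemma H_shift_le (m : ℕ) : ∀ N : ℕ, H 1 (N + m) - H 1 N ≤ m / ((N : ℝ) + 1) := by
  induction m with
  | zero => intro N; simp
  | succ m ih =>
    intro N
    have e : N + (m + 1) = (N + m) + 1 := by omega
    rw [e, H_succ']
    have h1 : 1 / (((N + m : ℕ) : ℝ) + 1) ≤ 1 / ((N : ℝ) + 1) := by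
      apply one_div_le_one_div_of_le (by positivity)
      push_cast
      linarith [Nat.cast_nonneg (α := ℝ) m]
    have h2 := ih N
    have hsplit : ((m : ℝ) + 1) / ((N : ℝ) + 1) = (m : ℝ) / ((N : ℝ) + 1) + 1 / ((N : ℝ) + 1) := by
      ring
    push_cast
    push_cast at h1 h2
    linarith

lemma tendsto_H_shift (m : ℕ) :
    Tendsto (fun N : ℕ => H 1 (N + m) - H 1 N) atTop (𝓝 0) := by
  have hub : Tendsto (fun N : ℕ => (m : ℝ) / ((N : ℝ) + 1)) atTop (𝓝 0) := by
    have := tendsto_one_div_add_atTop_nhds_zero_nat.const_mul (m : ℝ)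
    simpa [mul_one_div, div_eq_mul_inv] using this
  refine tendsto_of_tendsto_of_tendsto_of_le_of_le tendsto_const_nhds hub ?_ ?_
  · intro N
    have : H 1 N ≤ H 1 (N + m) := by
      have : ∀ k, H 1 N ≤ H 1 (N + k) := by
        intro k
        induction k with
        | zero => simp
        | succ j ihj =>
          have e : N + (j + 1) = (N + j) + 1 := by omega
          rw [e, H_succ']
          have : 0 ≤ 1 / (((N + j : ℕ) : ℝ) + 1) := by positivity
          linarith
      exact this m
    show (0:ℝ) ≤ H 1 (N + m) - H 1 N
    linarith
  · exact H_shift_le m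

lemma tendsto_h_tail (m : ℕ) :
    Tendsto (fun N : ℕ => h 1 N / ((N : ℝ) + 1 + m)) atTop (𝓝 0) := by
  refine tendsto_of_tendsto_of_tendsto_of_le_of_le' tendsto_const_nhds tendsto_H_div ?_ ?_
  · filter_upwards with N
    have := h_nonneg' N
    positivity
  · filter_upwards [eventually_ge_atTop 1] with N hN
    have hN1 : (1 : ℝ) ≤ (N : ℝ) := by exact_mod_cast hN
    have hm : (0 : ℝ) ≤ m := Nat.cast_nonneg m
    exact div_le_div₀ (H_nonneg' N) (h_le_H N) (by linarith) (by linarith)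

noncomputable def term (N m : ℕ) : ℝ :=
  (2 * h 1 N - H 1 (N + m) + H 1 m) / (2 * (m : ℝ) + 1) - h 1 N / ((N : ℝ) + 1 + m)

lemma term_step (N m : ℕ) :
    term (N + 1) m = term N m
      + h 1 (N + 1) * (1 / ((N : ℝ) + 1 + m) - 1 / ((N : ℝ) + 2 + m)) := by
  unfold term
  have e : (N + 1) + m = (N + m) + 1 := by omega
  rw [e, H_succ', h_succ']
  have d1 : (2 * (m : ℝ) + 1) ≠ 0 := by positivity
  have d2 : ((N : ℝ) + 1 + m) ≠ 0 := by positivity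
  have d3 : ((N : ℝ) + 2 + m) ≠ 0 := by positivity
  have d4 : (2 * (N : ℝ) + 1) ≠ 0 := by positivity
  push_cast
  field_simp
  ring

lemma key (i : ℕ) : ∀ N : ℕ,
    (i : ℝ) * ∑ k ∈ Finset.range N, h 1 (k + 1) / (((k : ℝ) + 1) * ((i : ℝ) + ((k : ℝ) + 1)))
      = ∑ m ∈ Finset.range i, term N m := by
  intro N
  induction N with
  | zero =>
    simp only [Finset.range_zero, Finset.sum_empty, mul_zero]
    exact (Finset.sum_eq_zero fun m _ => by simp [term, h_zero']).symm
  | succ N ih =>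
    rw [Finset.sum_range_succ, mul_add, ih]
    have hstep : ∑ m ∈ Finset.range i, term (N + 1) m
        = ∑ m ∈ Finset.range i, (term N m
            + h 1 (N + 1) * (1 / ((N : ℝ) + 1 + m) - 1 / ((N : ℝ) + 2 + m))) :=
      Finset.sum_congr rfl fun m _ => term_step N m
    have tele : ∑ m ∈ Finset.range i, (1 / ((N : ℝ) + 1 + m) - 1 / ((N : ℝ) + 2 + m))
        = 1 / ((N : ℝ) + 1) - 1 / ((N : ℝ) + 1 + i) := by
      have t := Finset.sum_range_sub' (fun m : ℕ => 1 / ((N : ℝ) + 1 + m)) i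
      simp only [Nat.cast_zero, add_zero] at t
      rw [← t]
      refine Finset.sum_congr rfl fun m _ => ?_
      push_cast
      ring
    rw [hstep, Finset.sum_add_distrib, ← Finset.mul_sum, tele]
    have hN1 : ((N : ℝ) + 1) ≠ 0 := by positivity
    have hNi : ((N : ℝ) + 1 + i) ≠ 0 := by positivity
    have hiN : ((i : ℝ) + ((N : ℝ) + 1)) ≠ 0 := by positivity
    congr 1
    field_simp
    ring

lemma finId (i : ℕ) : ∑ m ∈ Finset.range i, H 1 m / (2 * (m : ℝ) + 1)
    = H 1 i * h 1 i - ∑ k ∈ Finset.Icc 1 i, h 1 k / k := by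
  induction i with
  | zero => simp [H_zero', h_zero']
  | succ n ih =>
    rw [Finset.sum_range_succ, ih, Finset.sum_Icc_succ_top (by omega : 1 ≤ n + 1),
      H_succ', h_succ']
    have d1 : ((n : ℝ) + 1) ≠ 0 := by positivity
    have d2 : (2 * (n : ℝ) + 1) ≠ 0 := by positivity
    push_cast
    field_simp
    ring

lemma term_tendsto (m : ℕ) :
    Tendsto (fun N => term N m) atTop (𝓝 ((2 * Real.log 2 + H 1 m) / (2 * (m : ℝ) + 1))) := by
  have comb : Tendsto (fun N : ℕ =>
      ((2 * h 1 N - H 1 N) - (H 1 (N + m) - H 1 N) + H 1 m) / (2 * (m : ℝ) + 1)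
        - h 1 N / ((N : ℝ) + 1 + m)) atTop
      (𝓝 ((2 * Real.log 2 - 0 + H 1 m) / (2 * (m : ℝ) + 1) - 0)) :=
    (((tendsto_two_h_sub_H.sub (tendsto_H_shift m)).add_const (H 1 m)).div_const _).sub
      (tendsto_h_tail m)
  have hval : (2 * Real.log 2 - 0 + H 1 m) / (2 * (m : ℝ) + 1) - 0
      = (2 * Real.log 2 + H 1 m) / (2 * (m : ℝ) + 1) := by ring
  rw [hval] at comb
  refine comb.congr fun N => ?_
  simp only [term]
  ring

theorem stmt6 (i : ℕ) (hi : 0 < i) :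
    ∑' k : ℕ, h 1 (k + 1) / (((k : ℝ) + 1) * ((i : ℝ) + ((k : ℝ) + 1))) =
      2 * Real.log 2 * h 1 i / i + H 1 i * h 1 i / i - (1 / i) * ∑ k ∈ Finset.Icc 1 i, h 1 k / k := by
  have hi' : ((i : ℝ)) ≠ 0 := Nat.cast_ne_zero.mpr hi.ne'
  set f : ℕ → ℝ := fun k => h 1 (k + 1) / (((k : ℝ) + 1) * ((i : ℝ) + ((k : ℝ) + 1))) with hf
  have hfnn : ∀ k, 0 ≤ f k := fun k => div_nonneg (h_nonneg' _) (by positivity)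
  set Λ : ℝ := ∑ m ∈ Finset.range i, (2 * Real.log 2 + H 1 m) / (2 * (m : ℝ) + 1) with hΛ
  have lim : Tendsto (fun N => ∑ m ∈ Finset.range i, term N m) atTop (𝓝 Λ) :=
    tendsto_finset_sum _ fun m _ => term_tendsto m
  have keylim : Tendsto (fun N => (i : ℝ) * ∑ k ∈ Finset.range N, f k) atTop (𝓝 Λ) :=
    lim.congr fun N => (key i N).symm
  have plim : Tendsto (fun N => ∑ k ∈ Finset.range N, f k) atTop (𝓝 ((1 / (i : ℝ)) * Λ)) := by
    have := keylim.const_mul (1 / (i : ℝ))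
    refine this.congr fun N => ?_
    field_simp
  have hs : HasSum f ((1 / (i : ℝ)) * Λ) :=
    (hasSum_iff_tendsto_nat_of_nonneg hfnn _).mpr plim
  rw [hs.tsum_eq]
  have hΛval : Λ = 2 * Real.log 2 * h 1 i
      + (H 1 i * h 1 i - ∑ k ∈ Finset.Icc 1 i, h 1 k / k) := by
    have e1 : Λ = ∑ m ∈ Finset.range i,
        (2 * Real.log 2 * (1 / (2 * (m : ℝ) + 1)) + H 1 m / (2 * (m : ℝ) + 1)) :=
      Finset.sum_congr rfl fun m _ => by ring
    rw [e1, Finset.sum_add_distrib, ← Finset.mul_sum, ← h_range, finId]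
  rw [hΛval]
  ring
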